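/- Fix β > 0 and an integer n ≥ 1, and let 0 ≤ a ≤ b ≤ n and 0 ≤ c ≤ d ≤ n be integers with c ≤ a and d ≤ b (equivalently, c ≤ min{a,d} ≤ max{a,d} ≤ b). Then 0 ≤ E_{μ_{ab}}[j] − E_{μ_{cd}}[j] ≤ (a+b)/2 − (c+d)/2, where E_{μ_{ab}}[j] and E_{μ_{cd}}[j] denote the means of μ_{ab} and μ_{cd}. -/

import Mathlib

namespace SOS

/-- The weight `exp(-β(|j-a| + |j-b|))` defining the distribution `μ_{ab}` on `{0,…,n}`. -/
noncomputable def wt (β : ℝ) (a b j : ℕ) : ℝ :=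
  Real.exp (-β * (|(j : ℝ) - (a : ℝ)| + |(j : ℝ) - (b : ℝ)|))

/-- The mean `E_{μ_{ab}}[j]` of the distribution `μ_{ab}` on `{0,…,n}`. -/
noncomputable def meanAB (β : ℝ) (n a b : ℕ) : ℝ :=
  (∑ j ∈ Finset.range (n + 1), (j : ℝ) * wt β a b j) / ∑ j ∈ Finset.range (n + 1), wt β a b j

/-- `ε(a,b) = E_{μ_{ab}}[j] - (a+b)/2`. -/
noncomputable def epsAB (β : ℝ) (n a b : ℕ) : ℝ :=
  meanAB β n a b - ((a : ℝ) + (b : ℝ)) / 2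

set_option maxHeartbeats 1000000

lemma geom_id (q : ℝ) (r : ℕ) : (1 - q) * ∑ k ∈ Finset.range r, q^k = 1 - q^r := by
  induction r with
  | zero => simp
  | succ r ih => rw [Finset.sum_range_succ, mul_add, ih, pow_succ]; ring

lemma geom_id2 (q : ℝ) (r : ℕ) :
    (1 - q) * ∑ k ∈ Finset.range r, ((k:ℝ)+1) * q^(k+1)
      = q * (∑ k ∈ Finset.range r, q^k) - (r:ℝ) * q^(r+1) := by
  induction r with
  | zero => simp
  | succ r ih =>
    rw [Finset.sum_range_succ, Finset.sum_range_succ, mul_add, ih]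
    push_cast; ring

lemma sum_cast_id (r : ℕ) : ∑ i ∈ Finset.range r, (i:ℝ) = (r:ℝ)*((r:ℝ)-1)/2 := by
  induction r with
  | zero => simp
  | succ r ih => rw [Finset.sum_range_succ, ih]; push_cast; ring

lemma bernoulli_pow (q : ℝ) (hq : 0 ≤ q) (r : ℕ) : 1 - (r:ℝ)*(1-q) ≤ q^r := by
  have h := one_add_mul_le_pow (a := q - 1) (by linarith) r
  have : (1 + (q-1))^r = q^r := by ring_nf
  nlinarith [h]

lemma wt_eq (β : ℝ) {a b : ℕ} (hab : a ≤ b) (j : ℕ) :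
    wt β a b j = Real.exp (-(β * ((b:ℝ) - (a:ℝ))))
      * ((Real.exp (-(2*β)))^(a-j) * (Real.exp (-(2*β)))^(j-b)) := by
  rw [wt, ← Real.exp_nat_mul, ← Real.exp_nat_mul, ← Real.exp_add, ← Real.exp_add]
  congr 1
  have hab' : (a:ℝ) ≤ b := Nat.cast_le.mpr hab
  rcases le_total j a with h | h
  · have h2 : j ≤ b := h.trans hab
    have hc : ((a - j : ℕ) : ℝ) = (a:ℝ) - j := Nat.cast_sub h
    have hj : (j:ℝ) ≤ a := Nat.cast_le.mpr h
    have hj2 : (j:ℝ) ≤ b := Nat.cast_le.mpr h2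
    rw [Nat.sub_eq_zero_of_le h2, hc, abs_of_nonpos (by linarith), abs_of_nonpos (by linarith)]
    push_cast; ring
  · rcases le_total j b with h2 | h2
    · have hj : (a:ℝ) ≤ j := Nat.cast_le.mpr h
      have hj2 : (j:ℝ) ≤ b := Nat.cast_le.mpr h2
      rw [Nat.sub_eq_zero_of_le h, Nat.sub_eq_zero_of_le h2,
        abs_of_nonneg (by linarith), abs_of_nonpos (by linarith)]
      push_cast; ring
    · have hj : (a:ℝ) ≤ j := Nat.cast_le.mpr h
      have hj2 : (b:ℝ) ≤ j := Nat.cast_le.mpr h2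
      have hc : ((j - b : ℕ) : ℝ) = (j:ℝ) - b := Nat.cast_sub h2
      rw [Nat.sub_eq_zero_of_le h, hc, abs_of_nonneg (by linarith), abs_of_nonneg (by linarith)]
      push_cast; ring

lemma div_scale (K : ℝ) (hK : K ≠ 0) (f g : ℕ → ℝ) (s : Finset ℕ) :
    (∑ j ∈ s, f j * (K * g j)) / (∑ j ∈ s, K * g j)
      = (∑ j ∈ s, f j * g j) / (∑ j ∈ s, g j) := by
  have h1 : ∑ j ∈ s, f j * (K * g j) = K * ∑ j ∈ s, f j * g j := by
    rw [Finset.mul_sum]; exact Finset.sum_congr rfl (fun j _ => by ring)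
  have h2 : ∑ j ∈ s, K * g j = K * ∑ j ∈ s, g j := by rw [Finset.mul_sum]
  rw [h1, h2, mul_div_mul_left _ _ hK]

lemma mean_eq_W (β : ℝ) (n : ℕ) {a b : ℕ} (hab : a ≤ b) :
    meanAB β n a b = (∑ j ∈ Finset.range (n+1),
        (j:ℝ) * ((Real.exp (-(2*β)))^(a-j) * (Real.exp (-(2*β)))^(j-b)))
      / (∑ j ∈ Finset.range (n+1), (Real.exp (-(2*β)))^(a-j) * (Real.exp (-(2*β)))^(j-b)) := by
  unfold meanAB
  simp_rw [wt_eq β hab]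
  exact div_scale _ (Real.exp_ne_zero _) _ _ _

lemma key_poly (q M P E : ℝ) (hq0 : 0 ≤ q) (hq1 : q ≤ 1) (hM0 : 0 ≤ M) (hMq : M ≤ q)
    (hP0 : 0 ≤ P) (hP1 : P ≤ 1) (hE : 0 ≤ E) :
    2*(1-M)*(2*((E+1)*(1-q)+q*(1-P))*(1-M) + E*(E+1)*(1-q)^2 + 2*E*q*(1-P)*(1-q) + 2*q*(1-P)^2)
      ≤ 2*((((E+1)*(1-q)+q*(1-P)) + q*(1-M)) * ((((E+1)*(1-q)+q*(1-P)) + (1-M)))) := by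
  have hs : (0:ℝ) ≤ 1 - q := by linarith
  have hd : (0:ℝ) ≤ q - M := by linarith
  have he : (0:ℝ) ≤ 1 - P := by linarith
  nlinarith [mul_nonneg (mul_nonneg (mul_nonneg hq0 hM0) hd) he,
    mul_nonneg (mul_nonneg (mul_nonneg (mul_nonneg hq0 hM0) hs) he) hE,
    mul_nonneg (mul_nonneg (mul_nonneg hM0 hs) hs) (mul_nonneg hE hE),
    mul_nonneg (mul_nonneg (mul_nonneg hM0 hd) hs) hE,
    mul_nonneg (mul_nonneg (mul_nonneg hq0 hM0) he) he,
    mul_nonneg (mul_nonneg (mul_nonneg hq0 hd) hP0) he,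
    mul_nonneg (mul_nonneg (mul_nonneg hM0 hs) hs) hE,
    mul_nonneg (mul_nonneg (mul_nonneg hq0 hd) hs) hP0,
    mul_nonneg (mul_nonneg hM0 hd) hs,
    mul_nonneg (mul_nonneg (mul_nonneg hq0 hs) hP0) he,
    mul_nonneg (mul_nonneg hM0 hs) hs,
    mul_nonneg (mul_nonneg (mul_nonneg hq0 hM0) hs) he,
    mul_nonneg (mul_nonneg (mul_nonneg hq0 hd) hd) hP0,
    mul_nonneg (mul_nonneg (mul_nonneg hq0 hs) hs) hP0]

lemma wt_pos (β : ℝ) (a b j : ℕ) : 0 < wt β a b j := Real.exp_pos _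

lemma sum_wt_pos (β : ℝ) (n a b : ℕ) : 0 < ∑ j ∈ Finset.range (n+1), wt β a b j :=
  Finset.sum_pos (fun j _ => wt_pos β a b j) (by simp)

lemma mean_reflect (β : ℝ) (n a b : ℕ) (han : a ≤ n) (hbn : b ≤ n) :
    meanAB β n a b = n - meanAB β n (n-b) (n-a) := by
  have key : ∀ j, j ≤ n → wt β (n-b) (n-a) j = wt β a b (n - j) := by
    intro j hj
    unfold wt
    congr 1
    have c1 : ((n - j : ℕ) : ℝ) = (n:ℝ) - j := Nat.cast_sub hj
    have c2 : ((n - a : ℕ) : ℝ) = (n:ℝ) - a := Nat.cast_sub han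
    have c3 : ((n - b : ℕ) : ℝ) = (n:ℝ) - b := Nat.cast_sub hbn
    rw [c1, c2, c3]
    have e1 : |(n:ℝ) - j - a| = |(j:ℝ) - ((n:ℝ) - a)| := by
      rw [← abs_neg ((n:ℝ) - j - a)]; congr 1; ring
    have e2 : |(n:ℝ) - j - b| = |(j:ℝ) - ((n:ℝ) - b)| := by
      rw [← abs_neg ((n:ℝ) - j - b)]; congr 1; ring
    rw [e1, e2]; ring
  have hS : ∑ j ∈ Finset.range (n+1), wt β (n-b) (n-a) j
      = ∑ j ∈ Finset.range (n+1), wt β a b j := by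
    rw [← Finset.sum_range_reflect (fun j => wt β a b j) (n+1)]
    refine Finset.sum_congr rfl (fun j hj => ?_)
    have hj' : j ≤ n := Nat.lt_succ_iff.mp (Finset.mem_range.mp hj)
    rw [key j hj']
    congr 1
  have hM : ∑ j ∈ Finset.range (n+1), (j:ℝ) * wt β (n-b) (n-a) j
      = (n:ℝ) * (∑ j ∈ Finset.range (n+1), wt β a b j)
        - ∑ j ∈ Finset.range (n+1), (j:ℝ) * wt β a b j := by
    have h1 : ∑ j ∈ Finset.range (n+1), (j:ℝ) * wt β (n-b) (n-a) j
        = ∑ j ∈ Finset.range (n+1), (((n - j : ℕ)):ℝ) * wt β a b j := by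
      rw [← Finset.sum_range_reflect (fun j => (((n - j : ℕ)):ℝ) * wt β a b j) (n+1)]
      refine Finset.sum_congr rfl (fun j hj => ?_)
      have hj' : j ≤ n := Nat.lt_succ_iff.mp (Finset.mem_range.mp hj)
      rw [key j hj']
      have : n + 1 - 1 - j = n - j := by omega
      rw [this]
      have : n - (n - j) = j := by omega
      rw [this]
    rw [h1, Finset.mul_sum, ← Finset.sum_sub_distrib]
    refine Finset.sum_congr rfl (fun j hj => ?_)
    have hj' : j ≤ n := Nat.lt_succ_iff.mp (Finset.mem_range.mp hj)
    rw [Nat.cast_sub hj']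
    ring
  unfold meanAB
  rw [hM, hS]
  have hS0 := sum_wt_pos β n a b
  field_simp
  ring
lemma step_b (β : ℝ) (hβ : 0 < β) (n a b : ℕ) (hab : a ≤ b) (hbn : b < n) :
    0 ≤ meanAB β n a (b+1) - meanAB β n a b ∧
      meanAB β n a (b+1) - meanAB β n a b ≤ 1/2 := by
  have hq0 : 0 < Real.exp (-(2*β)) := Real.exp_pos _
  have hq1 : Real.exp (-(2*β)) < 1 := by rw [Real.exp_lt_one_iff]; linarith
  set q : ℝ := Real.exp (-(2*β)) with hqdef
  set m : ℕ := n - b with hmdef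
  have hm1 : 1 ≤ m := by omega
  set e : ℕ := b - a with hedef
  set g : ℝ := ∑ k ∈ Finset.range m, q^k with hgdef
  set h : ℝ := ∑ k ∈ Finset.range a, q^k with hhdef
  set Cm : ℝ := ∑ k ∈ Finset.range m, ((k:ℝ)+1)*q^(k+1) with hCmdef
  set Cp : ℝ := ∑ k ∈ Finset.range a, ((k:ℝ)+1)*q^(k+1) with hCpdef
  set A : ℝ := ((e:ℝ)+1) + q*h with hAdef
  set D : ℝ := (e:ℝ)*((e:ℝ)+1)/2 + (e:ℝ)*(q*h) + Cp with hDdef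
  have he0 : (0:ℝ) ≤ (e:ℝ) := Nat.cast_nonneg e
  have hh0 : 0 ≤ h := Finset.sum_nonneg fun k _ => by positivity
  have hg0 : 0 < g :=
    Finset.sum_pos (fun k _ => by positivity) ⟨0, Finset.mem_range.mpr (by omega)⟩
  have hCm0 : 0 ≤ Cm := Finset.sum_nonneg fun k _ => by positivity
  have hCp0 : 0 ≤ Cp := Finset.sum_nonneg fun k _ => by positivity
  have hA0 : 0 < A := by
    rw [hAdef]
    have := mul_nonneg hq0.le hh0
    linarith
  have hD0 : 0 ≤ D := by
    rw [hDdef]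
    have h4 := mul_nonneg he0 (mul_nonneg hq0.le hh0)
    have h5 : 0 ≤ (e:ℝ)*((e:ℝ)+1) := mul_nonneg he0 (by linarith)
    linarith
  -- base sums over range (b+1)
  have base1 : ∑ i ∈ Finset.range (b+1), q^(i-e) = A := by
    rw [← Finset.sum_range_add_sum_Ico _ (show e+1 ≤ b+1 by omega)]
    have p1 : ∑ i ∈ Finset.range (e+1), q^(i-e) = ((e:ℝ)+1) := by
      have c1 : ∑ i ∈ Finset.range (e+1), q^(i-e) = ∑ i ∈ Finset.range (e+1), (1:ℝ) :=
        Finset.sum_congr rfl fun i hi => by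
          have hi' : i < e + 1 := Finset.mem_range.mp hi
          have : i - e = 0 := by omega
          rw [this, pow_zero]
      rw [c1]; simp
    have p2 : ∑ i ∈ Finset.Ico (e+1) (b+1), q^(i-e) = q*h := by
      rw [Finset.sum_Ico_eq_sum_range]
      have hbe : b + 1 - (e+1) = a := by omega
      rw [hbe]
      have c2 : ∑ k ∈ Finset.range a, q^(e+1+k-e) = ∑ k ∈ Finset.range a, q*q^k :=
        Finset.sum_congr rfl fun k _ => by
          have : e + 1 + k - e = k + 1 := by omega
          rw [this, pow_succ]; ring
      rw [c2, ← Finset.mul_sum, ← hhdef]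
    rw [p1, p2, hAdef]
  have base2 : ∑ i ∈ Finset.range (b+1), (i:ℝ)*q^(i-e) = D := by
    rw [← Finset.sum_range_add_sum_Ico _ (show e+1 ≤ b+1 by omega)]
    have p1 : ∑ i ∈ Finset.range (e+1), (i:ℝ)*q^(i-e) = (e:ℝ)*((e:ℝ)+1)/2 := by
      have c1 : ∑ i ∈ Finset.range (e+1), (i:ℝ)*q^(i-e) = ∑ i ∈ Finset.range (e+1), (i:ℝ) :=
        Finset.sum_congr rfl fun i hi => by
          have hi' : i < e + 1 := Finset.mem_range.mp hi
          have : i - e = 0 := by omega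
          rw [this, pow_zero, mul_one]
      rw [c1, sum_cast_id]
      push_cast
      ring
    have p2 : ∑ i ∈ Finset.Ico (e+1) (b+1), (i:ℝ)*q^(i-e) = (e:ℝ)*(q*h) + Cp := by
      rw [Finset.sum_Ico_eq_sum_range]
      have hbe : b + 1 - (e+1) = a := by omega
      rw [hbe]
      have c2 : ∑ k ∈ Finset.range a, ((e+1+k : ℕ):ℝ)*q^(e+1+k-e)
          = ∑ k ∈ Finset.range a, ((e:ℝ)*(q*q^k) + ((k:ℝ)+1)*q^(k+1)) :=
        Finset.sum_congr rfl fun k _ => by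
          have h1 : e + 1 + k - e = k + 1 := by omega
          rw [h1]
          push_cast
          rw [pow_succ]
          ring
      rw [c2, Finset.sum_add_distrib, ← Finset.mul_sum, ← Finset.mul_sum, ← hhdef, ← hCpdef]
    rw [p1, p2, hDdef]
    ring
  -- lower sums
  have hlow1 : ∀ c : ℕ, b ≤ c →
      ∑ j ∈ Finset.range (b+1), q^(a-j)*q^(j-c) = A := by
    intro c hc
    rw [← base1, ← Finset.sum_range_reflect (fun i => q^(i-e)) (b+1)]
    refine Finset.sum_congr rfl fun j hj => ?_
    have hj' : j ≤ b := by
      have := Finset.mem_range.mp hj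
      omega
    have h1 : j - c = 0 := by omega
    have h2 : b + 1 - 1 - j - e = a - j := by omega
    rw [h1, pow_zero, mul_one, h2]
  have hlow2 : ∀ c : ℕ, b ≤ c →
      ∑ j ∈ Finset.range (b+1), (j:ℝ)*(q^(a-j)*q^(j-c)) = (b:ℝ)*A - D := by
    intro c hc
    have hmid : ∑ j ∈ Finset.range (b+1), (j:ℝ)*(q^(a-j)*q^(j-c))
        = ∑ i ∈ Finset.range (b+1), ((b:ℝ) - (i:ℝ))*q^(i-e) := by
      rw [← Finset.sum_range_reflect (fun i => ((b:ℝ) - (i:ℝ))*q^(i-e)) (b+1)]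
      refine Finset.sum_congr rfl fun j hj => ?_
      have hj' : j ≤ b := by
        have := Finset.mem_range.mp hj
        omega
      have h1 : j - c = 0 := by omega
      have h2 : b + 1 - 1 - j - e = a - j := by omega
      have h3 : ((b + 1 - 1 - j : ℕ):ℝ) = (b:ℝ) - (j:ℝ) := by
        have h4 : b + 1 - 1 - j = b - j := by omega
        rw [h4, Nat.cast_sub hj']
      rw [h1, pow_zero, mul_one, h2, h3]
      ring
    rw [hmid]
    have c3 : ∑ i ∈ Finset.range (b+1), ((b:ℝ) - (i:ℝ))*q^(i-e)
        = ∑ i ∈ Finset.range (b+1), ((b:ℝ)*q^(i-e) - (i:ℝ)*q^(i-e)) :=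
      Finset.sum_congr rfl fun i _ => by ring
    rw [c3, Finset.sum_sub_distrib, ← Finset.mul_sum, base1, base2]
  -- upper sums
  have hico : ∀ f : ℕ → ℝ, ∑ j ∈ Finset.Ico (b+1) (n+1), f j
      = ∑ k ∈ Finset.range m, f (b+1+k) := by
    intro f
    rw [Finset.sum_Ico_eq_sum_range]
    have : n + 1 - (b+1) = m := by omega
    rw [this]
  have hqg : ∑ k ∈ Finset.range m, q^(k+1) = q*g := by
    rw [hgdef, Finset.mul_sum]
    exact Finset.sum_congr rfl fun k _ => by rw [pow_succ]; ring
  have hup1 : ∑ j ∈ Finset.Ico (b+1) (n+1), q^(a-j)*q^(j-b) = q*g := by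
    rw [hico, ← hqg]
    refine Finset.sum_congr rfl fun k _ => ?_
    have h1 : a - (b+1+k) = 0 := by omega
    have h2 : b+1+k - b = k+1 := by omega
    rw [h1, h2, pow_zero, one_mul]
  have hup2 : ∑ j ∈ Finset.Ico (b+1) (n+1), (j:ℝ)*(q^(a-j)*q^(j-b)) = (b:ℝ)*(q*g) + Cm := by
    rw [hico]
    have c4 : ∑ k ∈ Finset.range m, ((b+1+k : ℕ):ℝ)*(q^(a-(b+1+k))*q^(b+1+k-b))
        = ∑ k ∈ Finset.range m, ((b:ℝ)*q^(k+1) + ((k:ℝ)+1)*q^(k+1)) :=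
      Finset.sum_congr rfl fun k _ => by
        have h1 : a - (b+1+k) = 0 := by omega
        have h2 : b+1+k - b = k+1 := by omega
        rw [h1, h2, pow_zero, one_mul]
        push_cast
        ring
    rw [c4, Finset.sum_add_distrib, ← Finset.mul_sum, hqg, ← hCmdef]
  have hup1' : ∑ j ∈ Finset.Ico (b+1) (n+1), q^(a-j)*q^(j-(b+1)) = g := by
    rw [hico, hgdef]
    refine Finset.sum_congr rfl fun k _ => ?_
    have h1 : a - (b+1+k) = 0 := by omega
    have h2 : b+1+k - (b+1) = k := by omega
    rw [h1, h2, pow_zero, one_mul]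
  have hup2' : q * ∑ j ∈ Finset.Ico (b+1) (n+1), (j:ℝ)*(q^(a-j)*q^(j-(b+1)))
      = (b:ℝ)*(q*g) + Cm := by
    rw [hico, Finset.mul_sum]
    have c5 : ∑ k ∈ Finset.range m, q*(((b+1+k : ℕ):ℝ)*(q^(a-(b+1+k))*q^(b+1+k-(b+1))))
        = ∑ k ∈ Finset.range m, ((b:ℝ)*q^(k+1) + ((k:ℝ)+1)*q^(k+1)) :=
      Finset.sum_congr rfl fun k _ => by
        have h1 : a - (b+1+k) = 0 := by omega
        have h2 : b+1+k - (b+1) = k := by omega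
        rw [h1, h2, pow_zero, one_mul]
        push_cast
        rw [pow_succ]
        ring
    rw [c5, Finset.sum_add_distrib, ← Finset.mul_sum, hqg, ← hCmdef]
  -- mean formulas
  have hsplit : ∀ f : ℕ → ℝ, ∑ j ∈ Finset.range (n+1), f j
      = ∑ j ∈ Finset.range (b+1), f j + ∑ j ∈ Finset.Ico (b+1) (n+1), f j :=
    fun f => (Finset.sum_range_add_sum_Ico f (by omega)).symm
  have dAg : (0:ℝ) < A + g := by linarith
  have dAqg : (0:ℝ) < A + q*g := by
    have := mul_pos hq0 hg0
    linarith
  have dqAg : (0:ℝ) < q*(A+g) := mul_pos hq0 dAg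
  have dbig : (0:ℝ) < q*(A+g)*(A+q*g) := mul_pos dqAg dAqg
  have hmean : meanAB β n a b = ((b:ℝ)*A - D + ((b:ℝ)*(q*g) + Cm)) / (A + q*g) := by
    rw [mean_eq_W β n hab, ← hqdef, hsplit, hsplit, hlow1 b le_rfl, hlow2 b le_rfl, hup1, hup2]
  have hmean' : meanAB β n a (b+1)
      = (q*((b:ℝ)*A - D) + ((b:ℝ)*(q*g) + Cm)) / (q*(A+g)) := by
    rw [mean_eq_W β n (show a ≤ b+1 by omega), ← hqdef, hsplit, hsplit,
      hlow1 (b+1) (by omega), hlow2 (b+1) (by omega), hup1']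
    rw [div_eq_div_iff dAg.ne' dqAg.ne']
    linear_combination (A + g) * hup2'
  have hdiff : meanAB β n a (b+1) - meanAB β n a b
      = ((1-q)*(A*Cm + q*g*D)) / (q*(A+g)*(A+q*g)) := by
    rw [hmean', hmean, div_sub_div _ _ dqAg.ne' dAqg.ne',
      div_eq_div_iff (mul_pos dqAg dAqg).ne' dbig.ne']
    ring
  have hnum0 : 0 ≤ (1-q)*(A*Cm + q*g*D) := by
    have h6 := mul_nonneg hA0.le hCm0
    have h7 := mul_nonneg (mul_nonneg hq0.le hg0.le) hD0
    have h8 : (0:ℝ) ≤ 1 - q := by linarith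
    nlinarith [mul_nonneg h8 (by linarith : (0:ℝ) ≤ A*Cm + q*g*D)]
  have hsg : (1-q)*g = 1 - q^m := by rw [hgdef]; exact geom_id q m
  have hsh : (1-q)*h = 1 - q^a := by rw [hhdef]; exact geom_id q a
  have hsCm : (1-q)*Cm = q*g - (m:ℝ)*q^(m+1) := by
    rw [hCmdef, hgdef]; exact geom_id2 q m
  have hsCp : (1-q)*Cp = q*h - (a:ℝ)*q^(a+1) := by
    rw [hCpdef, hhdef]; exact geom_id2 q a
  clear_value D A Cp Cm h g q m e
  constructor
  · rw [hdiff]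
    exact div_nonneg hnum0 dbig.le
  · rw [hdiff, div_le_iff₀ dbig]
    have hBm : 1 - (m:ℝ)*(1-q) ≤ q^m := bernoulli_pow q hq0.le m
    have hBp : 1 - (a:ℝ)*(1-q) ≤ q^a := bernoulli_pow q hq0.le a
    have hM0 : 0 < q^m := pow_pos hq0 m
    have hP0 : 0 < q^a := pow_pos hq0 a
    have hMq : q^m ≤ q := by
      have := pow_le_pow_of_le_one hq0.le hq1.le hm1
      rwa [pow_one] at this
    have hP1 : q^a ≤ 1 := by
      have := pow_le_pow_of_le_one hq0.le hq1.le (Nat.zero_le a)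
      rwa [pow_zero] at this
    have hM1 : q^m ≤ 1 := le_trans hMq hq1.le
    have hpsm : q^(m+1) = q^m*q := pow_succ q m
    have hpsp : q^(a+1) = q^a*q := pow_succ q a
    have e1 : (1-q)^2*Cm = q*(1-q^m) - ((m:ℝ)*(1-q))*(q*q^m) := by
      linear_combination (1-q)*hsCm + q*hsg - (m:ℝ)*(1-q)*hpsm
    have e2 : (1-q)^2*Cp = q*(1-q^a) - ((a:ℝ)*(1-q))*(q*q^a) := by
      linear_combination (1-q)*hsCp + q*hsh - (a:ℝ)*(1-q)*hpsp
    have hprodm : (1-q^m)*(q*q^m) ≤ ((m:ℝ)*(1-q))*(q*q^m) :=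
      mul_le_mul_of_nonneg_right (by linarith) (mul_nonneg hq0.le (pow_nonneg hq0.le m))
    have hprodp : (1-q^a)*(q*q^a) ≤ ((a:ℝ)*(1-q))*(q*q^a) :=
      mul_le_mul_of_nonneg_right (by linarith) (mul_nonneg hq0.le (pow_nonneg hq0.le a))
    have h1 : (1-q)^2*Cm ≤ q*(1-q^m)^2 := by linarith [e1, hprodm]
    have h2 : (1-q)^2*Cp ≤ q*(1-q^a)^2 := by linarith [e2, hprodp]
    have e3 : (1-q)^2*D = (e:ℝ)*((e:ℝ)+1)*(1-q)^2/2 + (e:ℝ)*q*(1-q^a)*(1-q)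
        + (1-q)^2*Cp := by
      rw [hDdef]
      linear_combination (e:ℝ)*q*(1-q)*hsh
    have h3 : (1-q)^2*D ≤ (e:ℝ)*((e:ℝ)+1)*(1-q)^2/2 + (e:ℝ)*q*(1-q^a)*(1-q)
        + q*(1-q^a)^2 := by linarith
    have hkey := key_poly q (q^m) (q^a) (e:ℝ) hq0.le hq1.le hM0.le hMq hP0.le hP1 he0
    have hα0 : (0:ℝ) ≤ ((e:ℝ)+1)*(1-q)+q*(1-q^a) := by
      have h9 : (0:ℝ) ≤ ((e:ℝ)+1)*(1-q) := mul_nonneg (by linarith) (by linarith)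
      have h10 : (0:ℝ) ≤ q*(1-q^a) := mul_nonneg hq0.le (by linarith)
      linarith
    have t1 : (((e:ℝ)+1)*(1-q)+q*(1-q^a))*((1-q)^2*Cm)
        ≤ (((e:ℝ)+1)*(1-q)+q*(1-q^a))*(q*(1-q^m)^2) :=
      mul_le_mul_of_nonneg_left h1 hα0
    have t2 : q*(1-q^m)*((1-q)^2*D)
        ≤ q*(1-q^m)*((e:ℝ)*((e:ℝ)+1)*(1-q)^2/2 + (e:ℝ)*q*(1-q^a)*(1-q) + q*(1-q^a)^2) :=
      mul_le_mul_of_nonneg_left h3 (mul_nonneg hq0.le (by linarith))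
    have hkeyq := mul_le_mul_of_nonneg_left hkey (show (0:ℝ) ≤ q/2 by linarith)
    have goal' : 2*((((e:ℝ)+1)*(1-q)+q*(1-q^a))*((1-q)^2*Cm) + q*(1-q^m)*((1-q)^2*D))
        ≤ q*(((((e:ℝ)+1)*(1-q)+q*(1-q^a)) + (1-q^m))
            * (((((e:ℝ)+1)*(1-q)+q*(1-q^a)) + q*(1-q^m)))) := by
      linarith [t1, t2, hkeyq]
    have hsA : (1-q)*A = ((e:ℝ)+1)*(1-q)+q*(1-q^a) := by
      rw [hAdef]
      linear_combination q*hsh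
    have hs2 : (0:ℝ) < (1-q)^2 := pow_pos (by linarith) 2
    have main : 2*((1-q)*(A*Cm+q*g*D)) ≤ q*((A+g)*(A+q*g)) := by
      refine le_of_mul_le_mul_left ?_ hs2
      calc (1-q)^2*(2*((1-q)*(A*Cm+q*g*D)))
          = 2*(((1-q)*A)*((1-q)^2*Cm) + q*((1-q)*g)*((1-q)^2*D)) := by ring
        _ = 2*((((e:ℝ)+1)*(1-q)+q*(1-q^a))*((1-q)^2*Cm) + q*(1-q^m)*((1-q)^2*D)) := by
            rw [hsA, hsg]
        _ ≤ q*(((((e:ℝ)+1)*(1-q)+q*(1-q^a)) + (1-q^m))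
            * (((((e:ℝ)+1)*(1-q)+q*(1-q^a)) + q*(1-q^m)))) := goal'
        _ = (1-q)^2*(q*((A+g)*(A+q*g))) := by
            rw [← hsA, ← hsg]
            ring
    linarith
lemma step_a (β : ℝ) (hβ : 0 < β) (n a b : ℕ) (hab : a < b) (hbn : b ≤ n) :
    0 ≤ meanAB β n (a+1) b - meanAB β n a b ∧
      meanAB β n (a+1) b - meanAB β n a b ≤ 1/2 := by
  have h1 : meanAB β n a b = n - meanAB β n (n-b) (n-a) :=
    mean_reflect β n a b (by omega) hbn
  have h2 : meanAB β n (a+1) b = n - meanAB β n (n-b) (n-(a+1)) :=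
    mean_reflect β n (a+1) b (by omega) hbn
  have h3 : n - (a+1) + 1 = n - a := by omega
  have hs := step_b β hβ n (n-b) (n-(a+1)) (by omega) (by omega)
  rw [h3] at hs
  exact ⟨by linarith [hs.1], by linarith [hs.2]⟩

lemma chain_b (β : ℝ) (hβ : 0 < β) (n c : ℕ) :
    ∀ d b : ℕ, c ≤ d → d ≤ b → b ≤ n →
      0 ≤ meanAB β n c b - meanAB β n c d ∧
        meanAB β n c b - meanAB β n c d ≤ ((b:ℝ) - (d:ℝ))/2 := by
  intro d b hcd hdb hbn
  induction b, hdb using Nat.le_induction with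
  | base => simp
  | succ b hdb ih =>
    have hbn' : b ≤ n := by omega
    have ih' := ih hbn'
    have hs := step_b β hβ n c b (by omega) (by omega)
    constructor
    · linarith [hs.1, ih'.1]
    · push_cast
      push_cast at ih'
      linarith [hs.2, ih'.2]

lemma chain_a (β : ℝ) (hβ : 0 < β) (n b : ℕ) (hbn : b ≤ n) :
    ∀ c a : ℕ, c ≤ a → a ≤ b →
      0 ≤ meanAB β n a b - meanAB β n c b ∧
        meanAB β n a b - meanAB β n c b ≤ ((a:ℝ) - (c:ℝ))/2 := by
  intro c a hca
  induction a, hca using Nat.le_induction with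
  | base => intro _; simp
  | succ a hca ih =>
    intro hab
    have ih' := ih (by omega)
    have hs := step_a β hβ n a b (by omega) hbn
    constructor
    · linarith [hs.1, ih'.1]
    · push_cast
      push_cast at ih'
      linarith [hs.2, ih'.2]


/-- If `c ≤ a ≤ b ≤ n` and `c ≤ d ≤ b` then
`0 ≤ E_{μ_{ab}}[j] - E_{μ_{cd}}[j] ≤ (a+b)/2 - (c+d)/2`. -/
theorem mean_comparison (β : ℝ) (hβ : 0 < β) (n : ℕ) (hn : 1 ≤ n)
    (a b c d : ℕ) (hab : a ≤ b) (hbn : b ≤ n) (hcd : c ≤ d) (hdn : d ≤ n)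
    (hca : c ≤ a) (hdb : d ≤ b) :
    0 ≤ meanAB β n a b - meanAB β n c d ∧
      meanAB β n a b - meanAB β n c d
        ≤ ((a : ℝ) + (b : ℝ)) / 2 - ((c : ℝ) + (d : ℝ)) / 2 := by
  have h1 := chain_b β hβ n c d b hcd hdb hbn
  have h2 := chain_a β hβ n b hbn c a hca hab
  exact ⟨by linarith [h1.1, h2.1], by linarith [h1.2, h2.2]⟩
end SOS
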